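/- Let λ > 0 be real, let k ∈ (−1,1) be real, let L₀ > 0 be real, and let η₀ ∈ ℂ be such that η₀² is a nonzero real number and sinh(η₀·L₀) ≠ 0. Then the complex number (−2λ(k−1)/((λ+1)(k+1))) · η₀² / sinh(η₀·L₀)² is a positive real number. -/

import Mathlib

lemma coeff_pos (lam k : ℝ) (hlam : 0 < lam) (hk : k ∈ Set.Ioo (-1 : ℝ) 1) :
    0 < -(2 * lam * (k - 1)) / ((lam + 1) * (k + 1)) := by
  obtain ⟨h1, h2⟩ := hk
  apply div_pos
  · nlinarith
  · nlinarith

/-- For `λ > 0`, `k ∈ (−1,1)`, `L₀ > 0` and `η₀ ∈ ℂ` with `η₀²` a nonzero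
real number and `sinh(η₀L₀) ≠ 0`, the quantity
`(−2λ(k−1)/((λ+1)(k+1)))·η₀²/sinh(η₀L₀)²` is a positive real number. -/
theorem stmt_10 (lam k L₀ : ℝ) (hlam : 0 < lam) (hk : k ∈ Set.Ioo (-1 : ℝ) 1) (hL : 0 < L₀)
    (η₀ : ℂ) (him : (η₀ ^ 2).im = 0) (hne : η₀ ^ 2 ≠ 0)
    (hs : Complex.sinh (η₀ * L₀) ≠ 0) :
    ∃ r : ℝ, 0 < r ∧
      (-(2 * (lam : ℂ) * ((k : ℂ) - 1)) / (((lam : ℂ) + 1) * ((k : ℂ) + 1))) * η₀ ^ 2 /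
        Complex.sinh (η₀ * (L₀ : ℂ)) ^ 2 = (r : ℂ) := by
  set c : ℝ := -(2 * lam * (k - 1)) / ((lam + 1) * (k + 1)) with hc
  have hcpos : 0 < c := coeff_pos lam k hlam hk
  have hcast : (-(2 * (lam : ℂ) * ((k : ℂ) - 1)) / (((lam : ℂ) + 1) * ((k : ℂ) + 1))) = (c : ℂ) := by
    rw [hc]; push_cast; ring
  have hη₀ : η₀ ≠ 0 := fun h => hne (by simp [h])
  have him' : 2 * η₀.re * η₀.im = 0 := by
    have := him
    simp [pow_two, Complex.mul_im] at this
    linarith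
  have hxy : η₀.re = 0 ∨ η₀.im = 0 := by
    rcases mul_eq_zero.1 him' with h | h
    · left
      rcases mul_eq_zero.1 h with h2 | h2
      · norm_num at h2
      · exact h2
    · right; exact h
  rcases hxy with hx | hy
  · -- purely imaginary: η₀ = y * I
    set y := η₀.im with hy
    have hη : η₀ = (y : ℂ) * Complex.I := by
      apply Complex.ext <;> simp [hx, hy]
    have hyne : y ≠ 0 := by
      intro h; apply hη₀; rw [hη, h]; simp
    have hsinh : Complex.sinh (η₀ * (L₀ : ℂ)) = (Real.sin (y * L₀) : ℂ) * Complex.I := by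
      rw [hη]
      have : (y : ℂ) * Complex.I * (L₀ : ℂ) = ((y * L₀ : ℝ) : ℂ) * Complex.I := by
        push_cast; ring
      rw [this, Complex.sinh_mul_I, Complex.ofReal_sin]
    have hsin : Real.sin (y * L₀) ≠ 0 := by
      intro h
      apply hs
      rw [hsinh, h]; simp
    refine ⟨c * y ^ 2 / (Real.sin (y * L₀)) ^ 2, by positivity, ?_⟩
    rw [hcast, hsinh, hη]
    have h1 : ((y : ℂ) * Complex.I) ^ 2 = -(y : ℂ) ^ 2 := by
      rw [mul_pow, Complex.I_sq]; ring
    have h2 : ((Real.sin (y * L₀) : ℂ) * Complex.I) ^ 2 = -((Real.sin (y * L₀) : ℝ) : ℂ) ^ 2 := by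
      rw [mul_pow, Complex.I_sq]; ring
    rw [h1, h2]
    have hsc : ((Real.sin (y * L₀) : ℝ) : ℂ) ≠ 0 := Complex.ofReal_ne_zero.2 hsin
    push_cast
    field_simp
  · -- real: η₀ = x
    set x := η₀.re with hx
    have hη : η₀ = (x : ℂ) := by
      apply Complex.ext <;> simp [hy, hx]
    have hxne : x ≠ 0 := by
      intro h; apply hη₀; rw [hη, h]; simp
    have hsinh : Complex.sinh (η₀ * (L₀ : ℂ)) = (Real.sinh (x * L₀) : ℂ) := by
      rw [hη, ← Complex.ofReal_mul, Complex.ofReal_sinh]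
    have hsin : Real.sinh (x * L₀) ≠ 0 := by
      intro h
      apply hs
      rw [hsinh, h]; simp
    refine ⟨c * x ^ 2 / (Real.sinh (x * L₀)) ^ 2, by positivity, ?_⟩
    rw [hcast, hsinh, hη]
    have hsc : ((Real.sinh (x * L₀) : ℝ) : ℂ) ≠ 0 := Complex.ofReal_ne_zero.2 hsin
    push_cast
    field_simp
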